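/- Let (M,d) be a metric space, G a compact group acting by isometries, and let OD := {(x,y) ∈ M×M : d(x,y) = d*(x*,y*)} be the set of pairs realizing the distance between their orbits. For (x,y) ∈ OD define π_{x,y} := (⋆_{(x,y)})_♯ ν_G ∈ P(M×M), where ⋆_{(x,y)}(g) = (gx,gy) and ν_G is the Haar probability measure. Then for all (x,y) ∈ OD: (1) W_p(ν_x, ν_y) = d*(x*,y*), and (2) π_{x,y} is a p-optimal coupling of (ν_x, ν_y). -/

import Mathlib

open MeasureTheory Filter Set
open scoped ENNReal

/-- A coupling of two measures. -/
def IsCoupling {X : Type*} [MeasurableSpace X]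
    (π : Measure (X × X)) (μ ν : Measure X) : Prop :=
  π.map Prod.fst = μ ∧ π.map Prod.snd = ν

/-- The `p`-transport cost of a plan. -/
noncomputable def transportCost (p : ℝ) {X : Type*} [PseudoMetricSpace X] [MeasurableSpace X]
    (π : Measure (X × X)) : ℝ≥0∞ :=
  ∫⁻ z, ENNReal.ofReal (dist z.1 z.2 ^ p) ∂π

/-- The minimal `p`-transport cost between two measures. -/
noncomputable def minCost (p : ℝ) {X : Type*} [PseudoMetricSpace X] [MeasurableSpace X]
    (μ ν : Measure X) : ℝ≥0∞ :=
  ⨅ π : {π : Measure (X × X) // IsCoupling π μ ν}, transportCost p π.1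

/-- The `p`-Wasserstein distance between two measures. -/
noncomputable def Wp (p : ℝ) {X : Type*} [PseudoMetricSpace X] [MeasurableSpace X]
    (μ ν : Measure X) : ℝ≥0∞ :=
  minCost p μ ν ^ (1 / p)

/-- A `p`-optimal coupling: a coupling whose cost realizes the minimal cost. -/
def IsOptimalCoupling (p : ℝ) {X : Type*} [PseudoMetricSpace X] [MeasurableSpace X]
    (π : Measure (X × X)) (μ ν : Measure X) : Prop :=
  IsCoupling π μ ν ∧ transportCost p π = minCost p μ ν

/-- Let `G` be a compact group acting by isometries on a metric space `M`,
with Haar probability measure `νG`.  Suppose `(x,y)` realizes the distance between their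
orbits, i.e. `d(x,y) = ⨅ g, d(g • x, y) = d*(x*,y*)`.  Let `ν_x, ν_y` be the pushforwards of
`νG` under `g ↦ g • x`, `g ↦ g • y`, and `π_{x,y}` the pushforward under `g ↦ (g • x, g • y)`.
Then `W_p(ν_x, ν_y) = d*(x*,y*)` and `π_{x,y}` is a `p`-optimal coupling of `(ν_x, ν_y)`. -/
theorem haar_coupling_optimal
    {M : Type*} [MetricSpace M] [MeasurableSpace M] [BorelSpace M]
    {G : Type*} [Group G] [TopologicalSpace G] [IsTopologicalGroup G] [CompactSpace G]
    [MeasurableSpace G] [BorelSpace G] [MulAction G M]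
    (hcont : Continuous fun q : G × M => q.1 • q.2)
    (hiso : ∀ (g : G) (x y : M), dist (g • x) (g • y) = dist x y)
    (νG : Measure G) [IsProbabilityMeasure νG] [νG.IsMulLeftInvariant]
    (p : ℝ) (hp : 1 ≤ p)
    (x y : M) (hOD : dist x y = ⨅ g : G, dist (g • x) y) :
    Wp p (νG.map fun g => g • x) (νG.map fun g => g • y)
        = ENNReal.ofReal (⨅ g : G, dist (g • x) y) ∧
    IsOptimalCoupling p (νG.map fun g => (g • x, g • y))
      (νG.map fun g => g • x) (νG.map fun g => g • y) := by
  have hp0 : 0 < p := lt_of_lt_of_le one_pos hp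
  have hDnn : (0:ℝ) ≤ dist x y := dist_nonneg
  rw [← hOD]
  set D := dist x y with hD
  -- continuity / measurability of the action maps
  have hcx : Continuous fun g : G => g • x :=
    hcont.comp (continuous_id.prodMk continuous_const)
  have hcy : Continuous fun g : G => g • y :=
    hcont.comp (continuous_id.prodMk continuous_const)
  have hmx : Measurable fun g : G => g • x := hcx.measurable
  have hmy : Measurable fun g : G => g • y := hcy.measurable
  have hmxy : Measurable fun g : G => (g • x, g • y) := hmx.prodMk hmy
  -- it is a coupling
  have hcoup : IsCoupling (νG.map fun g => (g • x, g • y))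
      (νG.map fun g => g • x) (νG.map fun g => g • y) := by
    constructor
    · rw [Measure.map_map measurable_fst hmxy]; rfl
    · rw [Measure.map_map measurable_snd hmxy]; rfl
  -- upper bound for the cost of π
  have hcost_le : transportCost p (νG.map fun g => (g • x, g • y)) ≤ ENNReal.ofReal (D ^ p) := by
    rw [transportCost]
    refine le_trans (lintegral_map_le _ (fun g : G => (g • x, g • y))) ?_
    have : ∀ g : G, ENNReal.ofReal (dist ((g • x, g • y) : M × M).1 (g • x, g • y).2 ^ p)
        = ENNReal.ofReal (D ^ p) := by
      intro g; simp [hiso g x y, hD]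
    simp only [this]
    simp [lintegral_const]
  -- the bad set has measure zero for any coupling
  have hbddBelow : BddBelow (Set.range fun g : G => dist (g • x) y) :=
    ⟨0, by rintro _ ⟨g, rfl⟩; exact dist_nonneg⟩
  -- lower bound for the cost of any coupling
  have hlow : ∀ π' : Measure (M × M),
      IsCoupling π' (νG.map fun g => g • x) (νG.map fun g => g • y) →
      ENNReal.ofReal (D ^ p) ≤ transportCost p π' := by
    intro π' hπ'
    set A : Set M := closure (MulAction.orbit G x) with hA
    set B : Set M := closure (MulAction.orbit G y) with hB
    have hAm : MeasurableSet A := isClosed_closure.measurableSet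
    have hBm : MeasurableSet B := isClosed_closure.measurableSet
    have hSm : MeasurableSet (A ×ˢ B) := hAm.prod hBm
    -- D ≤ dist on A × B
    have hKclosed : IsClosed {z : M × M | D ≤ dist z.1 z.2} :=
      isClosed_le continuous_const continuous_dist
    have hsub : A ×ˢ B ⊆ {z : M × M | D ≤ dist z.1 z.2} := by
      rw [hA, hB, ← closure_prod_eq]
      refine closure_minimal ?_ hKclosed
      rintro ⟨w, z⟩ ⟨⟨g, rfl⟩, ⟨h, rfl⟩⟩
      have h1 : dist ((h⁻¹ * g) • x) y = dist (g • x) (h • y) := by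
        rw [mul_smul]
        calc dist (h⁻¹ • g • x) y = dist (h • h⁻¹ • g • x) (h • y) := (hiso h _ _).symm
        _ = dist (g • x) (h • y) := by rw [smul_inv_smul]
      have h2 : D ≤ dist ((h⁻¹ * g) • x) y := hOD ▸ ciInf_le hbddBelow (h⁻¹ * g)
      exact le_of_le_of_eq h2 h1
    -- π' is concentrated on A × B
    have hmapfst : π' (Prod.fst ⁻¹' Aᶜ) = 0 := by
      have : π'.map Prod.fst Aᶜ = π' (Prod.fst ⁻¹' Aᶜ) :=
        Measure.map_apply measurable_fst hAm.compl
      rw [← this, hπ'.1, Measure.map_apply hmx hAm.compl]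
      have : (fun g : G => g • x) ⁻¹' Aᶜ = ∅ := by
        ext g; simp only [Set.mem_preimage, Set.mem_compl_iff, Set.mem_empty_iff_false,
          iff_false, not_not]
        exact subset_closure (MulAction.mem_orbit x g)
      rw [this]; simp
    have hmapsnd : π' (Prod.snd ⁻¹' Bᶜ) = 0 := by
      have : π'.map Prod.snd Bᶜ = π' (Prod.snd ⁻¹' Bᶜ) :=
        Measure.map_apply measurable_snd hBm.compl
      rw [← this, hπ'.2, Measure.map_apply hmy hBm.compl]
      have : (fun g : G => g • y) ⁻¹' Bᶜ = ∅ := by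
        ext g; simp only [Set.mem_preimage, Set.mem_compl_iff, Set.mem_empty_iff_false,
          iff_false, not_not]
        exact subset_closure (MulAction.mem_orbit y g)
      rw [this]; simp
    have hScompl : π' ((A ×ˢ B)ᶜ) = 0 := by
      have hsub2 : (A ×ˢ B)ᶜ ⊆ Prod.fst ⁻¹' Aᶜ ∪ Prod.snd ⁻¹' Bᶜ := by
        rintro ⟨w, z⟩ hwz
        simp only [Set.mem_compl_iff, Set.mem_prod, not_and_or] at hwz
        rcases hwz with h | h
        · exact Or.inl h
        · exact Or.inr h
      refine le_antisymm (le_trans (measure_mono hsub2) ?_) zero_le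
      refine le_trans (measure_union_le _ _) ?_
      rw [hmapfst, hmapsnd]; simp
    have huniv : π' Set.univ = 1 := by
      have h1 : π'.map Prod.fst Set.univ = π' Set.univ := by
        rw [Measure.map_apply measurable_fst MeasurableSet.univ]; rfl
      have h2 : (νG.map fun g : G => g • x) Set.univ = 1 := by
        rw [Measure.map_apply hmx MeasurableSet.univ]; simp
      rw [← h1, hπ'.1, h2]
    have hS1 : π' (A ×ˢ B) = 1 := by
      have := measure_add_measure_compl (μ := π') hSm
      rw [hScompl, add_zero, huniv] at this
      exact this
    -- compare with the indicator of A × B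
    calc ENNReal.ofReal (D ^ p)
        = ∫⁻ z, (A ×ˢ B).indicator (fun _ => ENNReal.ofReal (D ^ p)) z ∂π' := by
          rw [lintegral_indicator hSm]; simp [hS1]
      _ ≤ ∫⁻ z, ENNReal.ofReal (dist z.1 z.2 ^ p) ∂π' := by
          refine lintegral_mono fun z => ?_
          by_cases hz : z ∈ A ×ˢ B
          · rw [Set.indicator_of_mem hz]
            exact ENNReal.ofReal_le_ofReal
              (Real.rpow_le_rpow hDnn (hsub hz) hp0.le)
          · rw [Set.indicator_of_notMem hz]; exact zero_le
  -- minCost value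
  have hmin : minCost p (νG.map fun g => g • x) (νG.map fun g => g • y)
      = ENNReal.ofReal (D ^ p) := by
    refine le_antisymm ?_ ?_
    · exact le_trans (iInf_le _ ⟨_, hcoup⟩) hcost_le
    · exact le_iInf fun π' => hlow π'.1 π'.2
  have hcost : transportCost p (νG.map fun g => (g • x, g • y)) = ENNReal.ofReal (D ^ p) :=
    le_antisymm hcost_le (hlow _ hcoup)
  refine ⟨?_, ⟨hcoup, by rw [hcost, hmin]⟩⟩
  rw [Wp, hmin, ← ENNReal.ofReal_rpow_of_nonneg hDnn hp0.le, ← ENNReal.rpow_mul,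
    mul_one_div_cancel hp0.ne', ENNReal.rpow_one]
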